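/- arXiv:1011.2649 — 2 statements merged into one kernel-verified Lean document; each statement's English description precedes it below -/
import Mathlib

section
/- Second marginalization identity of Appendix A: summing p(μ^A, μ^B | t, F)·p(t | F) over all admissible match-count vectors t, where p(t|F) = [Π_j C(F_j,t_j)/C(N,T)]·[C(n^A,T)·C(N−n^A,n^B−T)/C(N,n^B)], yields p(μ^A,μ^B|F) = [Π_j C(F_j, f^A_j)·C(F_j, f^B_j)] / [C(n^A; f^A)·C(n^B; f^B)·C(N,n^A)·C(N,n^B)], i.e., the two samples are conditionally independent simple random samples without replacement given the population counts F. -/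
open Finset

lemma coord_sum (F a b : ℕ) (ha : a ≤ F) :
    ∑ t ∈ Finset.Icc 0 (min a b),
      F.choose t * ((F - a).choose (b - t) * (F - t).choose (a - t))
    = F.choose a * F.choose b := by
  have hr : Finset.Icc 0 (min a b) = Finset.range (min a b + 1) := by
    ext x; simp [Nat.lt_succ_iff]
  rw [hr]
  have h1 : ∀ t ∈ Finset.range (min a b + 1),
      F.choose t * ((F - a).choose (b - t) * (F - t).choose (a - t))
      = F.choose a * (a.choose t * (F - a).choose (b - t)) := by
    intro t ht
    simp only [Finset.mem_range] at ht
    have ht' : t ≤ a := by omega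
    calc F.choose t * ((F - a).choose (b - t) * (F - t).choose (a - t))
        = F.choose t * (F - t).choose (a - t) * (F - a).choose (b - t) := by ring
      _ = F.choose a * a.choose t * (F - a).choose (b - t) := by
          rw [← Nat.choose_mul (n := F) ht']
      _ = F.choose a * (a.choose t * (F - a).choose (b - t)) := by ring
  rw [Finset.sum_congr rfl h1, ← Finset.mul_sum]
  congr 1
  have h2 : ∑ t ∈ Finset.range (min a b + 1), a.choose t * (F - a).choose (b - t)
      = ∑ t ∈ Finset.range (b + 1), a.choose t * (F - a).choose (b - t) := by
    apply Finset.sum_subset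
    · intro x hx; simp only [Finset.mem_range] at *; omega
    · intro x hx hx'; simp only [Finset.mem_range] at hx hx'
      have : a < x := by omega
      simp [Nat.choose_eq_zero_of_lt this]
  rw [h2]
  have h3 := Nat.add_choose_eq a (F - a) b
  rw [Nat.add_sub_cancel' ha] at h3
  rw [h3, Finset.Nat.sum_antidiagonal_eq_sum_range_succ_mk]

/-- Second marginalization identity of Appendix A: summing
p(μ^A, μ^B | t, F)·p(t | F) over all admissible match-count vectors t yields
p(μ^A, μ^B | F) = Π_j C(F_j,f^A_j)·C(F_j,f^B_j)
  / [C(n^A; f^A)·C(n^B; f^B)·C(N,n^A)·C(N,n^B)],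
i.e. the two samples are conditionally independent simple random samples
without replacement given the population counts F. -/
theorem marginalize_match_count_vector
    (k : ℕ) (F fA fB : Fin k → ℕ) (N nA nB : ℕ)
    (hN : N = ∑ j, F j) (hnA : nA = ∑ j, fA j) (hnB : nB = ∑ j, fB j)
    (hA : ∀ j, fA j ≤ F j) (hB : ∀ j, fB j ≤ F j) :
    (∑ t ∈ Finset.Icc (0 : Fin k → ℕ) (fun j => min (fA j) (fB j)),
        if ∀ j, fA j + fB j ≤ F j + t j then
          -- p(μ^A, μ^B | t, F) as derived in Appendix A
          ((∏ j, ((F j - fA j).choose (fB j - t j) : ℚ) *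
              ((F j - t j).choose (fA j - t j) : ℚ)) /
            (((nA.factorial : ℚ) / ∏ j, ((fA j).factorial : ℚ)) *
              (((nB.factorial : ℚ) / ∏ j, ((fB j).factorial : ℚ)) *
                (((N - nA).choose (nB - ∑ j, t j) : ℚ) *
                  ((N - ∑ j, t j).choose (nA - ∑ j, t j) : ℚ)))))
          -- times p(t | F)
          * (((∏ j, ((F j).choose (t j) : ℚ)) / (N.choose (∑ j, t j) : ℚ)) *
              (((nA.choose (∑ j, t j) : ℚ) *
                  ((N - nA).choose (nB - ∑ j, t j) : ℚ)) / (N.choose nB : ℚ)))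
        else 0)
    = (∏ j, ((F j).choose (fA j) : ℚ) * ((F j).choose (fB j) : ℚ)) /
        (((nA.factorial : ℚ) / ∏ j, ((fA j).factorial : ℚ)) *
          (((nB.factorial : ℚ) / ∏ j, ((fB j).factorial : ℚ)) *
            ((N.choose nA : ℚ) * (N.choose nB : ℚ)))) := by
  have hNA : nA ≤ N := by
    rw [hN, hnA]; exact Finset.sum_le_sum fun j _ => hA j
  have hNB : nB ≤ N := by
    rw [hN, hnB]; exact Finset.sum_le_sum fun j _ => hB j
  set D : ℚ := ((nA.factorial : ℚ) / ∏ j, ((fA j).factorial : ℚ)) *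
          (((nB.factorial : ℚ) / ∏ j, ((fB j).factorial : ℚ)) *
            ((N.choose nA : ℚ) * (N.choose nB : ℚ))) with hD
  have step : ∀ t ∈ Finset.Icc (0 : Fin k → ℕ) (fun j => min (fA j) (fB j)),
      (if ∀ j, fA j + fB j ≤ F j + t j then
          ((∏ j, ((F j - fA j).choose (fB j - t j) : ℚ) *
              ((F j - t j).choose (fA j - t j) : ℚ)) /
            (((nA.factorial : ℚ) / ∏ j, ((fA j).factorial : ℚ)) *
              (((nB.factorial : ℚ) / ∏ j, ((fB j).factorial : ℚ)) *
                (((N - nA).choose (nB - ∑ j, t j) : ℚ) *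
                  ((N - ∑ j, t j).choose (nA - ∑ j, t j) : ℚ)))))
          * (((∏ j, ((F j).choose (t j) : ℚ)) / (N.choose (∑ j, t j) : ℚ)) *
              (((nA.choose (∑ j, t j) : ℚ) *
                  ((N - nA).choose (nB - ∑ j, t j) : ℚ)) / (N.choose nB : ℚ)))
        else 0)
      = (∏ j, (((F j).choose (t j) : ℚ) *
            (((F j - fA j).choose (fB j - t j) : ℚ) *
              ((F j - t j).choose (fA j - t j) : ℚ)))) / D := by
    intro t ht
    rw [Finset.mem_Icc] at ht
    have hts : ∀ j, t j ≤ min (fA j) (fB j) := ht.2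
    have hTA : (∑ j, t j) ≤ nA := by
      rw [hnA]; exact Finset.sum_le_sum fun j _ => (hts j).trans (min_le_left _ _)
    have hTB : (∑ j, t j) ≤ nB := by
      rw [hnB]; exact Finset.sum_le_sum fun j _ => (hts j).trans (min_le_right _ _)
    by_cases hc : ∀ j, fA j + fB j ≤ F j + t j
    · rw [if_pos hc]
      have hsum : nA + nB ≤ N + ∑ j, t j := by
        rw [hN, hnA, hnB, ← Finset.sum_add_distrib, ← Finset.sum_add_distrib]
        exact Finset.sum_le_sum fun j _ => hc j
      have hfa : (∏ j, ((fA j).factorial : ℚ)) ≠ 0 := by positivity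
      have hfb : (∏ j, ((fB j).factorial : ℚ)) ≠ 0 := by positivity
      have hnaf : (nA.factorial : ℚ) ≠ 0 := by positivity
      have hnbf : (nB.factorial : ℚ) ≠ 0 := by positivity
      have hMA : ((nA.factorial : ℚ) / ∏ j, ((fA j).factorial : ℚ)) ≠ 0 :=
        div_ne_zero hnaf hfa
      have hMB : ((nB.factorial : ℚ) / ∏ j, ((fB j).factorial : ℚ)) ≠ 0 :=
        div_ne_zero hnbf hfb
      have hc1 : (((N - nA).choose (nB - ∑ j, t j) : ℕ) : ℚ) ≠ 0 := by
        have : nB - ∑ j, t j ≤ N - nA := by omega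
        exact_mod_cast (Nat.choose_pos this).ne'
      have hc2 : (((N - ∑ j, t j).choose (nA - ∑ j, t j) : ℕ) : ℚ) ≠ 0 := by
        have : nA - ∑ j, t j ≤ N - ∑ j, t j := by omega
        exact_mod_cast (Nat.choose_pos this).ne'
      have hc3 : ((N.choose (∑ j, t j) : ℕ) : ℚ) ≠ 0 := by
        have : (∑ j, t j) ≤ N := le_trans hTA hNA
        exact_mod_cast (Nat.choose_pos this).ne'
      have hc5 : ((N.choose nB : ℕ) : ℚ) ≠ 0 := by
        exact_mod_cast (Nat.choose_pos hNB).ne'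
      have hCA : ((N.choose nA : ℕ) : ℚ) ≠ 0 := by
        exact_mod_cast (Nat.choose_pos hNA).ne'
      have key : ((N.choose nA : ℕ) : ℚ) * (nA.choose (∑ j, t j) : ℕ)
          = ((N.choose (∑ j, t j) : ℕ) : ℚ) *
            ((N - ∑ j, t j).choose (nA - ∑ j, t j) : ℕ) := by
        exact_mod_cast congrArg (Nat.cast : ℕ → ℚ) (Nat.choose_mul (n := N) hTA)
      rw [div_mul_div_comm, div_mul_div_comm, hD]
      simp only [Finset.prod_mul_distrib]
      rw [div_eq_div_iff (by positivity) (by positivity)]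
      linear_combination ((∏ j, ((F j).choose (t j) : ℚ)) *
        (∏ j, ((F j - fA j).choose (fB j - t j) : ℚ)) *
        (∏ j, ((F j - t j).choose (fA j - t j) : ℚ)) *
        ((nA.factorial : ℚ) / ∏ j, ((fA j).factorial : ℚ)) *
        ((nB.factorial : ℚ) / ∏ j, ((fB j).factorial : ℚ)) *
        (((N - nA).choose (nB - ∑ j, t j) : ℚ)) * ((N.choose nB : ℚ))) * key
    · rw [if_neg hc]
      push_neg at hc
      obtain ⟨j, hj⟩ := hc
      have hz : ((F j - fA j).choose (fB j - t j) : ℕ) = 0 := by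
        apply Nat.choose_eq_zero_of_lt
        have := hA j
        have := (hts j).trans (min_le_right _ _)
        omega
      symm
      rw [Finset.prod_eq_zero (Finset.mem_univ j) (by rw [hz]; push_cast; ring), zero_div]
  rw [Finset.sum_congr rfl step, ← Finset.sum_div]
  congr 1
  have hpi : Finset.Icc (0 : Fin k → ℕ) (fun j => min (fA j) (fB j))
      = Fintype.piFinset (fun j => Finset.Icc 0 (min (fA j) (fB j))) := by
    ext t
    simp [Finset.mem_Icc, Fintype.mem_piFinset, Pi.le_def]
  rw [hpi, ← Finset.prod_univ_sum (fun j => Finset.Icc 0 (min (fA j) (fB j)))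
      (fun j s => (((F j).choose s : ℚ) *
        (((F j - fA j).choose (fB j - s) : ℚ) * ((F j - s).choose (fA j - s) : ℚ))))]
  apply Finset.prod_congr rfl
  intro j _
  have hcs := coord_sum (F j) (fA j) (fB j) (hA j)
  calc ∑ s ∈ Finset.Icc 0 (min (fA j) (fB j)),
        (((F j).choose s : ℚ) * (((F j - fA j).choose (fB j - s) : ℚ) *
          ((F j - s).choose (fA j - s) : ℚ)))
      = ((∑ s ∈ Finset.Icc 0 (min (fA j) (fB j)),
          (F j).choose s * ((F j - fA j).choose (fB j - s) *
            (F j - s).choose (fA j - s)) : ℕ) : ℚ) := by push_cast; ring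
    _ = _ := by rw [hcs]; push_cast; ring
end

section
/- The full conditional of the match counts factorizes into independent hypergeometrics: if p(t | F, μ^A, μ^B) ∝ p(μ^A, μ^B | F, t)·p(t | F) with the expressions from the paper, then p(t | F, μ^A, μ^B) = Π_{j=1}^k C(f^A_j, t_j)·C(F_j − f^A_j, f^B_j − t_j)/C(F_j, f^B_j). Equivalently, as an algebraic identity: Π_j [F_j!/(t_j!(f^A_j−t_j)!(f^B_j−t_j)!(F_j−f^A_j−f^B_j+t_j)!)] divided by its sum over all admissible t equals Π_j C(f^A_j,t_j)C(F_j−f^A_j,f^B_j−t_j)/C(F_j,f^B_j). -/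
open Finset

lemma fact_ne_zero_q (n : ℕ) : (n.factorial : ℚ) ≠ 0 :=
  Nat.cast_ne_zero.mpr (Nat.factorial_ne_zero _)

lemma key_fact (F fA fB t : ℕ) (h1 : t ≤ fA) (h2 : t ≤ fB)
    (h3 : fA + fB ≤ F + t) (hA : fA ≤ F) :
    ((F.factorial : ℚ) / ((t.factorial : ℚ) * ((fA - t).factorial *
        ((fB - t).factorial * (F + t - fA - fB).factorial))))
    = (F.choose fA : ℚ) * ((fA.choose t : ℚ) * ((F - fA).choose (fB - t) : ℚ)) := by
  have hBt : fB - t ≤ F - fA := by omega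
  rw [Nat.cast_choose ℚ hA, Nat.cast_choose ℚ h1, Nat.cast_choose ℚ hBt]
  have e1 : F - fA - (fB - t) = F + t - fA - fB := by omega
  rw [e1]
  field_simp [fact_ne_zero_q]

lemma vand (F fA fB : ℕ) (hA : fA ≤ F) (hB : fB ≤ F) :
    ∑ i ∈ Finset.Icc 0 (min fA fB), (fA.choose i : ℚ) * ((F - fA).choose (fB - i) : ℚ)
      = (F.choose fB : ℚ) := by
  have h : F.choose fB
      = ∑ i ∈ Finset.range (fB + 1), fA.choose i * (F - fA).choose (fB - i) := by
    conv_lhs => rw [← Nat.add_sub_cancel' hA, Nat.add_choose_eq]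
    rw [Finset.Nat.sum_antidiagonal_eq_sum_range_succ_mk]
  rw [h]
  push_cast
  apply Finset.sum_subset
  · intro x hx
    simp only [Finset.mem_Icc, Finset.mem_range] at *
    omega
  · intro x hx hx'
    simp only [Finset.mem_Icc, Finset.mem_range] at hx hx'
    have : fA < x := by omega
    rw [Nat.choose_eq_zero_of_lt this]
    push_cast
    ring

/-- Appendix B: the full conditional of the match counts factorizes into
independent hypergeometric distributions. The unnormalized weight
w(t) = Π_j F_j!/(t_j!(f^A_j−t_j)!(f^B_j−t_j)!(F_j−f^A_j−f^B_j+t_j)!),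
divided by its sum over all admissible t, equals
Π_j C(f^A_j,t_j)·C(F_j−f^A_j, f^B_j−t_j)/C(F_j,f^B_j). -/
theorem match_counts_full_conditional_hypergeometric
    (k : ℕ) (F fA fB t : Fin k → ℕ)
    (hA : ∀ j, fA j ≤ F j) (hB : ∀ j, fB j ≤ F j)
    (h1 : ∀ j, t j ≤ fA j) (h2 : ∀ j, t j ≤ fB j)
    (h3 : ∀ j, fA j + fB j ≤ F j + t j) :
    (∏ j, ((F j).factorial : ℚ) /
        ((t j).factorial * ((fA j - t j).factorial *
          ((fB j - t j).factorial * (F j + t j - fA j - fB j).factorial)))) /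
      (∑ t' ∈ Finset.Icc (0 : Fin k → ℕ) (fun j => min (fA j) (fB j)),
        if ∀ j, fA j + fB j ≤ F j + t' j then
          ∏ j, ((F j).factorial : ℚ) /
            ((t' j).factorial * ((fA j - t' j).factorial *
              ((fB j - t' j).factorial * (F j + t' j - fA j - fB j).factorial)))
        else 0)
    = ∏ j, ((fA j).choose (t j) : ℚ) *
        ((F j - fA j).choose (fB j - t j) : ℚ) / ((F j).choose (fB j) : ℚ) := by
  have hnum : (∏ j, ((F j).factorial : ℚ) /
        ((t j).factorial * ((fA j - t j).factorial *
          ((fB j - t j).factorial * (F j + t j - fA j - fB j).factorial))))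
      = (∏ j, ((F j).choose (fA j) : ℚ)) *
        ∏ j, (((fA j).choose (t j) : ℚ) * ((F j - fA j).choose (fB j - t j) : ℚ)) := by
    rw [← Finset.prod_mul_distrib]
    exact Finset.prod_congr rfl fun j _ =>
      key_fact (F j) (fA j) (fB j) (t j) (h1 j) (h2 j) (h3 j) (hA j)
  have hden : (∑ t' ∈ Finset.Icc (0 : Fin k → ℕ) (fun j => min (fA j) (fB j)),
        if ∀ j, fA j + fB j ≤ F j + t' j then
          ∏ j, ((F j).factorial : ℚ) /
            ((t' j).factorial * ((fA j - t' j).factorial *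
              ((fB j - t' j).factorial * (F j + t' j - fA j - fB j).factorial)))
        else 0)
      = (∏ j, ((F j).choose (fA j) : ℚ)) * ∏ j, ((F j).choose (fB j) : ℚ) := by
    have step : ∀ t' ∈ Finset.Icc (0 : Fin k → ℕ) (fun j => min (fA j) (fB j)),
        (if ∀ j, fA j + fB j ≤ F j + t' j then
          ∏ j, ((F j).factorial : ℚ) /
            ((t' j).factorial * ((fA j - t' j).factorial *
              ((fB j - t' j).factorial * (F j + t' j - fA j - fB j).factorial)))
        else 0)
        = ∏ j, (((F j).choose (fA j) : ℚ) *
            (((fA j).choose (t' j) : ℚ) * ((F j - fA j).choose (fB j - t' j) : ℚ))) := by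
      intro t' ht'
      simp only [Finset.mem_Icc] at ht'
      have hle : ∀ j, t' j ≤ min (fA j) (fB j) := fun j => ht'.2 j
      by_cases hcond : ∀ j, fA j + fB j ≤ F j + t' j
      · rw [if_pos hcond]
        exact Finset.prod_congr rfl fun j _ =>
          key_fact (F j) (fA j) (fB j) (t' j)
            (le_trans (hle j) (min_le_left _ _))
            (le_trans (hle j) (min_le_right _ _)) (hcond j) (hA j)
      · rw [if_neg hcond]
        push_neg at hcond
        obtain ⟨j, hj⟩ := hcond
        symm
        apply Finset.prod_eq_zero (Finset.mem_univ j)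
        have hlt : F j - fA j < fB j - t' j := by
          have := hle j
          have := hA j
          omega
        rw [Nat.choose_eq_zero_of_lt hlt]
        push_cast
        ring
    rw [Finset.sum_congr rfl step]
    have hIcc : Finset.Icc (0 : Fin k → ℕ) (fun j => min (fA j) (fB j))
        = Fintype.piFinset (fun j => Finset.Icc 0 (min (fA j) (fB j))) := by
      ext x
      simp [Fintype.mem_piFinset, Finset.mem_Icc, Pi.le_def, forall_and]
    rw [hIcc]
    symm
    calc (∏ j, ((F j).choose (fA j) : ℚ)) * ∏ j, ((F j).choose (fB j) : ℚ)
        = ∏ j, ∑ i ∈ Finset.Icc 0 (min (fA j) (fB j)),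
            (((F j).choose (fA j) : ℚ) *
              (((fA j).choose i : ℚ) * ((F j - fA j).choose (fB j - i) : ℚ))) := by
          rw [← Finset.prod_mul_distrib]
          refine Finset.prod_congr rfl fun j _ => ?_
          rw [← vand (F j) (fA j) (fB j) (hA j) (hB j), Finset.mul_sum]
      _ = _ := by rw [Finset.prod_univ_sum]
  rw [hnum, hden]
  have hCA : (∏ j, ((F j).choose (fA j) : ℚ)) ≠ 0 :=
    Finset.prod_ne_zero_iff.mpr fun j _ =>
      Nat.cast_ne_zero.mpr (Nat.choose_pos (hA j)).ne'
  rw [mul_div_mul_left _ _ hCA, ← Finset.prod_div_distrib]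
end
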